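/- Let K ≥ 1, let B ∈ ℂ^{K×K} be Hermitian positive semidefinite, M̃ ∈ ℂ^{K×K} Hermitian negative definite, and A ∈ ℂ^{K×K} arbitrary. Let 𝒮 ⊆ {0,…,K−1}² and define, for T ∈ ℂ^{K×K}, f(T) := Tr(Tᴴ B T M̃) + 2 Re Tr(Aᴴ T). Suppose T* vanishes at every position outside 𝒮 and the matrix B T* M̃ + A vanishes at every position inside 𝒮. Then for every T ∈ ℂ^{K×K} vanishing at every position outside 𝒮, f(T) ≤ f(T*). -/

import Mathlib

open Matrix
open scoped ComplexOrder

private lemma psd_trace_re_nonneg {n : ℕ} {P : Matrix (Fin n) (Fin n) ℂ}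
    (hP : P.PosSemidef) : 0 ≤ (Matrix.trace P).re := by
  have h : ∀ i, 0 ≤ (P i i).re := by
    intro i
    have h2 : (0 : ℂ) ≤ P i i := by
      exact hP.diag_nonneg
    exact (Complex.le_def.mp h2).1
  have : (Matrix.trace P).re = ∑ i, (P i i).re := by
    simp [Matrix.trace, Matrix.diag, Complex.re_sum]
  rw [this]
  exact Finset.sum_nonneg (fun i _ => h i)

open scoped MatrixOrder in
private lemma psd_trace_mul_re_nonneg {n : ℕ} {P Q : Matrix (Fin n) (Fin n) ℂ}
    (hP : P.PosSemidef) (hQ : Q.PosSemidef) : 0 ≤ (Matrix.trace (P * Q)).re := by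
  have hs : CFC.sqrt Q * CFC.sqrt Q = Q := CFC.sqrt_mul_sqrt_self Q hQ.nonneg
  have hherm : (CFC.sqrt Q)ᴴ = CFC.sqrt Q := (CFC.sqrt_nonneg Q).posSemidef.isHermitian
  have key : Matrix.trace (P * Q) = Matrix.trace ((CFC.sqrt Q)ᴴ * P * CFC.sqrt Q) := by
    rw [hherm, Matrix.trace_mul_cycle, hs, Matrix.trace_mul_comm]
  rw [key]
  exact psd_trace_re_nonneg (hP.conjTranspose_mul_mul_same _)

private lemma tr4_cycle {n : ℕ} (W X Y Z : Matrix (Fin n) (Fin n) ℂ) :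
    Matrix.trace (W * X * Y * Z) = Matrix.trace (Z * W * X * Y) := by
  rw [Matrix.trace_mul_comm, ← Matrix.mul_assoc, ← Matrix.mul_assoc]

/-- interference-cancelation part of Proposition 1, Method I. Let `B` be
Hermitian positive semidefinite, `M̃` Hermitian negative definite, `A` arbitrary, and
`f(T) = Tr(Tᴴ B T M̃) + 2 Re Tr(Aᴴ T)`. If `T*` is supported on `𝒮` and `B T* M̃ + A`
vanishes on `𝒮`, then `T*` maximizes `f` over matrices supported on `𝒮`. -/
theorem method1_ic_max {K : ℕ} (hK : 1 ≤ K)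
    (B Mt A : Matrix (Fin K) (Fin K) ℂ)
    (hB : B.PosSemidef) (hMt : (-Mt).PosDef)
    (S : Set (Fin K × Fin K))
    (Tstar : Matrix (Fin K) (Fin K) ℂ)
    (hsupp : ∀ k ℓ : Fin K, (k, ℓ) ∉ S → Tstar k ℓ = 0)
    (hstat : ∀ k ℓ : Fin K, (k, ℓ) ∈ S → (B * Tstar * Mt + A) k ℓ = 0) :
    ∀ T : Matrix (Fin K) (Fin K) ℂ, (∀ k ℓ : Fin K, (k, ℓ) ∉ S → T k ℓ = 0) →
      (Matrix.trace (Tᴴ * B * T * Mt)).re + 2 * (Matrix.trace (Aᴴ * T)).re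
        ≤ (Matrix.trace (Tstarᴴ * B * Tstar * Mt)).re
          + 2 * (Matrix.trace (Aᴴ * Tstar)).re := by
  intro T hT
  set D : Matrix (Fin K) (Fin K) ℂ := T - Tstar with hD
  have hDsupp : ∀ k ℓ : Fin K, (k, ℓ) ∉ S → D k ℓ = 0 := by
    intro k ℓ h
    simp [hD, Matrix.sub_apply, hT k ℓ h, hsupp k ℓ h]
  have hBh : Bᴴ = B := hB.isHermitian
  have hMth : Mtᴴ = Mt := by
    have h := hMt.isHermitian
    rw [Matrix.IsHermitian, Matrix.conjTranspose_neg] at h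
    exact neg_inj.mp h
  -- stationarity gives: trace ((B*Tstar*Mt + A)ᴴ * D) = 0
  have hzero : Matrix.trace ((B * Tstar * Mt + A)ᴴ * D) = 0 := by
    rw [Matrix.trace]
    apply Finset.sum_eq_zero
    intro i _
    rw [Matrix.diag_apply, Matrix.mul_apply]
    apply Finset.sum_eq_zero
    intro j _
    rw [Matrix.conjTranspose_apply]
    by_cases h : (j, i) ∈ S
    · simp [hstat j i h]
    · simp [hDsupp j i h]
  have hzero' : Matrix.trace (Mt * Tstarᴴ * B * D) + Matrix.trace (Aᴴ * D) = 0 := by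
    have heq : (B * Tstar * Mt + A)ᴴ * D = Mt * Tstarᴴ * B * D + Aᴴ * D := by
      rw [Matrix.conjTranspose_add, Matrix.add_mul]
      congr 1
      simp only [Matrix.conjTranspose_mul, hBh, hMth, Matrix.mul_assoc]
    rw [heq, Matrix.trace_add] at hzero
    exact hzero
  have hcyc : Matrix.trace (Mt * Tstarᴴ * B * D) = Matrix.trace (Tstarᴴ * B * D * Mt) :=
    (tr4_cycle Tstarᴴ B D Mt).symm
  -- first cross term
  have hcross1 : Matrix.trace (Tstarᴴ * B * D * Mt) = - Matrix.trace (Aᴴ * D) := by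
    linear_combination hzero' - hcyc
  -- second cross term is the conjugate of the first
  have hcross2 : (Matrix.trace (Dᴴ * B * Tstar * Mt)).re
      = (Matrix.trace (Tstarᴴ * B * D * Mt)).re := by
    have h1 : (Dᴴ * B * Tstar * Mt)ᴴ = Mt * Tstarᴴ * B * D := by
      simp only [Matrix.conjTranspose_mul, Matrix.conjTranspose_conjTranspose, hBh, hMth,
        Matrix.mul_assoc]
    have h2 : star (Matrix.trace (Dᴴ * B * Tstar * Mt))
        = Matrix.trace (Tstarᴴ * B * D * Mt) := by
      rw [← Matrix.trace_conjTranspose, h1, hcyc]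
    calc (Matrix.trace (Dᴴ * B * Tstar * Mt)).re
        = (star (Matrix.trace (Dᴴ * B * Tstar * Mt))).re := (Complex.conj_re _).symm
      _ = (Matrix.trace (Tstarᴴ * B * D * Mt)).re := by rw [h2]
  -- expansion of the quadratic form at T = Tstar + D
  have hTeq : T = Tstar + D := by simp [hD]
  have hexp : Matrix.trace (Tᴴ * B * T * Mt)
      = Matrix.trace (Tstarᴴ * B * Tstar * Mt) + Matrix.trace (Tstarᴴ * B * D * Mt)
        + Matrix.trace (Dᴴ * B * Tstar * Mt) + Matrix.trace (Dᴴ * B * D * Mt) := by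
    rw [hTeq]
    simp only [Matrix.conjTranspose_add, Matrix.add_mul, Matrix.mul_add, Matrix.trace_add]
    ring
  have hlin : Matrix.trace (Aᴴ * T) = Matrix.trace (Aᴴ * Tstar) + Matrix.trace (Aᴴ * D) := by
    rw [hTeq, Matrix.mul_add, Matrix.trace_add]
  -- the quadratic remainder is nonpositive
  have hquad : (Matrix.trace (Dᴴ * B * D * Mt)).re ≤ 0 := by
    have hpsd : (Dᴴ * B * D).PosSemidef := hB.conjTranspose_mul_mul_same D
    have h := psd_trace_mul_re_nonneg hpsd hMt.posSemidef
    have heq : Matrix.trace (Dᴴ * B * D * -Mt) = - Matrix.trace (Dᴴ * B * D * Mt) := by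
      rw [Matrix.mul_neg, Matrix.trace_neg]
    rw [heq] at h
    simpa using h
  -- put everything together
  have e1 : (Matrix.trace (Tstarᴴ * B * D * Mt)).re = -(Matrix.trace (Aᴴ * D)).re := by
    rw [hcross1, Complex.neg_re]
  have e2 : (Matrix.trace (Dᴴ * B * Tstar * Mt)).re = -(Matrix.trace (Aᴴ * D)).re := by
    rw [hcross2, e1]
  rw [hexp, hlin]
  simp only [Complex.add_re, e1, e2]
  linarith [hquad]
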